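/- For an integer n ≥ 1, let F = Σ_{k≥0} (binom(nk, k)/((n−1)k+1)) X^k ∈ ℚ[[X]] be the Fuss–Catalan power series. Then n·X·F′ = F · Σ_{j≥1} binom(nj, j) X^j in ℚ[[X]], where F′ is the formal derivative of F. (Equivalently, F is the image under the map e of the Witt vector (1/n)·*binom(n,1), whose ghost components are binom(nj,j)/n.) -/

import Mathlib

open PowerSeries

namespace FussCatalanAux

open Finset

/-- Generalized binomial coefficient `x(x-1)...(x-j+1)/j!` over `ℚ`. -/
noncomputable def gb (x : ℚ) (j : ℕ) : ℚ :=
  (∏ i ∈ Finset.range j, (x - i)) / (Nat.factorial j)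

lemma fact_ne (j : ℕ) : ((Nat.factorial j : ℚ)) ≠ 0 := by
  exact_mod_cast Nat.factorial_ne_zero j

@[simp] lemma gb_zero (x : ℚ) : gb x 0 = 1 := by simp [gb]

lemma gb_succ (x : ℚ) (j : ℕ) : gb x (j + 1) = gb x j * (x - j) / (j + 1) := by
  unfold gb
  have hfac : ((Nat.factorial (j+1) : ℚ)) = ((j:ℚ) + 1) * (Nat.factorial j : ℚ) := by
    rw [Nat.factorial_succ]; push_cast; ring
  rw [Finset.prod_range_succ, hfac, div_mul_eq_mul_div, div_div, mul_comm ((j:ℚ) + 1)]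

lemma prod_shift (x : ℚ) (j : ℕ) :
    (∏ i ∈ Finset.range (j + 1), (x + 1 - i)) = (x + 1) * ∏ i ∈ Finset.range j, (x - i) := by
  rw [Finset.prod_range_succ']
  simp only [Nat.cast_zero, Nat.cast_add, Nat.cast_one, sub_zero]
  rw [mul_comm]
  congr 1
  exact Finset.prod_congr rfl fun i _ => by ring

lemma gb_pascal (x : ℚ) (j : ℕ) : gb (x + 1) (j + 1) = gb x (j + 1) + gb x j := by
  unfold gb
  rw [prod_shift, Finset.prod_range_succ, Nat.factorial_succ]
  have h2 := fact_ne j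
  have h3 : ((j : ℚ) + 1) ≠ 0 := by positivity
  push_cast
  field_simp
  ring

lemma gb_absorb (x : ℚ) (j : ℕ) : (x - j) * gb x j = x * gb (x - 1) j := by
  have h2 : (∏ i ∈ Finset.range (j + 1), (x - i)) =
      x * ∏ i ∈ Finset.range j, (x - 1 - i) := by
    rw [Finset.prod_range_succ']
    simp only [Nat.cast_zero, Nat.cast_add, Nat.cast_one, sub_zero]
    rw [mul_comm]
    congr 1
    exact Finset.prod_congr rfl fun i _ => by ring
  have h1 : (∏ i ∈ Finset.range (j + 1), (x - i)) =
      (∏ i ∈ Finset.range j, (x - i)) * (x - j) := Finset.prod_range_succ _ _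
  unfold gb
  have h := h1.symm.trans h2
  field_simp
  linear_combination h

lemma gb_nat (m j : ℕ) : gb (m : ℚ) j = Nat.choose m j := by
  induction j with
  | zero => simp
  | succ j IH =>
    rw [gb_succ, IH]
    rcases le_or_gt j m with h | h
    · have hnat := Nat.choose_succ_right_eq m j
      have hcast : ((m - j : ℕ) : ℚ) = (m : ℚ) - j := by
        push_cast [h]
        ring
      have h3 : ((j : ℚ) + 1) ≠ 0 := by positivity
      have hq : ((Nat.choose m (j+1) : ℚ)) * ((j:ℚ) + 1)
          = (Nat.choose m j : ℚ) * ((m - j : ℕ) : ℚ) := by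
        exact_mod_cast congrArg (Nat.cast : ℕ → ℚ) hnat
      rw [hcast] at hq
      rw [div_eq_iff h3]
      linear_combination -hq
    · have h1 : Nat.choose m j = 0 := Nat.choose_eq_zero_of_lt h
      have h2 : Nat.choose m (j + 1) = 0 := Nat.choose_eq_zero_of_lt (by omega)
      simp [h1, h2]

/-- The Fuss–Catalan coefficients. -/
noncomputable def cc (n k : ℕ) : ℚ := (Nat.choose (n * k) k : ℚ) / (((n : ℚ) - 1) * k + 1)

@[simp] lemma cc_zero (n : ℕ) : cc n 0 = 1 := by simp [cc]

lemma denom_pos {n : ℕ} (hn : 1 ≤ n) (k : ℕ) : (0:ℚ) < ((n : ℚ) - 1) * k + 1 := by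
  have h1 : (1:ℚ) ≤ (n:ℚ) := by exact_mod_cast hn
  have h2 : (0:ℚ) ≤ k := by positivity
  nlinarith

/-- key binomial relation (B): `(k+1)·C(nK,K) = D·C(nK,k)` with `K = k+1`, `D = (n-1)K+1`. -/
lemma hB {n : ℕ} (hn : 1 ≤ n) (k : ℕ) :
    ((k : ℚ) + 1) * (Nat.choose (n * (k+1)) (k+1) : ℚ) =
      (((n : ℚ) - 1) * ((k:ℚ)+1) + 1) * (Nat.choose (n * (k+1)) k : ℚ) := by
  have hnat := Nat.choose_succ_right_eq (n * (k+1)) k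
  have hle : k ≤ n * (k+1) := by nlinarith
  have hcast : ((n * (k+1) - k : ℕ) : ℚ) = (n : ℚ) * ((k:ℚ)+1) - k := by
    push_cast [hle]
    ring
  have hq : ((Nat.choose (n*(k+1)) (k+1) : ℚ)) * ((k:ℚ)+1)
      = (Nat.choose (n*(k+1)) k : ℚ) * ((n * (k+1) - k : ℕ) : ℚ) := by
    exact_mod_cast congrArg (Nat.cast : ℕ → ℚ) hnat
  rw [hcast] at hq
  linear_combination hq

lemma hPascal (n k : ℕ) :
    (Nat.choose (n * (k+1) + 1) (k+1) : ℚ) =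
      (Nat.choose (n * (k+1)) k : ℚ) + (Nat.choose (n * (k+1)) (k+1) : ℚ) := by
  exact_mod_cast congrArg (Nat.cast : ℕ → ℚ) (Nat.choose_succ_succ' (n * (k+1)) k)

/-- (D) : `C(nK+1,K) = (nK+1)·cc K`. -/
lemma hD {n : ℕ} (hn : 1 ≤ n) (k : ℕ) :
    (Nat.choose (n * (k+1) + 1) (k+1) : ℚ) = ((n : ℚ) * ((k:ℚ)+1) + 1) * cc n (k+1) := by
  have hd := (denom_pos hn (k+1)).ne'
  have hb := hB hn k
  have hp := hPascal n k
  unfold cc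
  rw [← mul_div_assoc, eq_div_iff (by push_cast at hd; exact_mod_cast hd)]
  push_cast
  linear_combination (((n:ℚ) - 1) * ((k:ℚ)+1) + 1) * hp - hb

/-- (C) : `cc K + n·C(nK,k) = C(nK+1,K)`. -/
lemma hC {n : ℕ} (hn : 1 ≤ n) (k : ℕ) :
    cc n (k+1) + (n:ℚ) * (Nat.choose (n * (k+1)) k : ℚ) =
      (Nat.choose (n * (k+1) + 1) (k+1) : ℚ) := by
  have hd : (((n:ℚ)-1) * ((k+1:ℕ):ℚ) + 1) ≠ 0 := by
    have := (denom_pos hn (k+1)).ne'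
    push_cast at this ⊢
    exact this
  have hb := hB hn k
  have hp := hPascal n k
  unfold cc
  rw [div_add' _ _ _ hd, div_eq_iff hd]
  push_cast
  linear_combination (-(((n:ℚ) - 1) * ((k:ℚ)+1) + 1)) * hp - ((n:ℚ) - 1) * hb


lemma gb_sub_one {n : ℕ} (hn : 1 ≤ n) (j : ℕ) :
    gb ((n:ℚ) * ((j:ℚ) + 1) - 1) (j + 1) =
      (((n:ℚ) - 1) / n) * (Nat.choose (n * (j + 1)) (j + 1) : ℚ) := by
  have hn0 : (n:ℚ) ≠ 0 := by
    have : (0:ℚ) < n := by exact_mod_cast hn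
    exact this.ne'
  have hj0 : ((j:ℚ) + 1) ≠ 0 := by positivity
  have hgb : gb ((n:ℚ) * ((j:ℚ) + 1)) (j + 1) = (Nat.choose (n * (j + 1)) (j + 1) : ℚ) := by
    have hx : ((n * (j + 1) : ℕ) : ℚ) = (n:ℚ) * ((j:ℚ) + 1) := by push_cast; ring
    rw [← hx, gb_nat]
  have habs := gb_absorb ((n:ℚ) * ((j:ℚ) + 1)) (j + 1)
  push_cast at habs
  rw [hgb] at habs
  rw [div_mul_eq_mul_div, eq_div_iff hn0]
  apply mul_left_cancel₀ hj0
  linear_combination -habs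

/-- Polynomial representation of the key difference function. -/
noncomputable def FP (n k : ℕ) (cs : ℕ → ℚ) : Polynomial ℚ :=
  (∑ j ∈ Finset.range (k + 1), Polynomial.C ((Nat.factorial j : ℚ)⁻¹ * cs j) *
      ∏ i ∈ Finset.range j, (Polynomial.X + Polynomial.C ((n:ℚ) * j - i)))
  - Polynomial.C ((Nat.factorial k : ℚ)⁻¹) *
      ∏ i ∈ Finset.range k, (Polynomial.X + Polynomial.C ((n:ℚ) * k + 1 - i))

lemma FP_eval (n k : ℕ) (cs : ℕ → ℚ) (x : ℚ) :
    (FP n k cs).eval x =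
      (∑ j ∈ Finset.range (k + 1), gb (x + n * j) j * cs j) - gb (x + n * k + 1) k := by
  unfold FP gb
  simp only [Polynomial.eval_sub, Polynomial.eval_finset_sum, Polynomial.eval_mul,
    Polynomial.eval_C, Polynomial.eval_prod, Polynomial.eval_add, Polynomial.eval_X]
  congr 1
  · apply Finset.sum_congr rfl
    intro j _
    have h : (∏ i ∈ Finset.range j, (x + ((n:ℚ) * j - i))) =
        ∏ i ∈ Finset.range j, ((x + (n:ℚ) * j) - i) :=
      Finset.prod_congr rfl fun i _ => by ring
    rw [h]
    ring
  · have h : (∏ i ∈ Finset.range k, (x + ((n:ℚ) * k + 1 - i))) =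
        ∏ i ∈ Finset.range k, ((x + (n:ℚ) * k + 1) - i) :=
      Finset.prod_congr rfl fun i _ => by ring
    rw [h]
    ring

lemma key {n : ℕ} (hn : 1 ≤ n) : ∀ k : ℕ, ∀ x : ℚ,
    ∑ j ∈ Finset.range (k + 1), gb (x + n * j) j * cc n (k - j) = gb (x + n * k + 1) k := by
  intro k
  induction k with
  | zero => intro x; simp
  | succ k IH =>
    have hn0 : (n:ℚ) ≠ 0 := by
      have : (0:ℚ) < n := by exact_mod_cast hn
      exact this.ne'
    set cs : ℕ → ℚ := fun j => cc n (k + 1 - j) with hcs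
    -- the difference function
    set f : ℚ → ℚ := fun x =>
      (∑ j ∈ Finset.range (k + 2), gb (x + n * j) j * cc n (k + 1 - j))
        - gb (x + (n:ℚ) * ((k + 1 : ℕ) : ℚ) + 1) (k + 1) with hfdef
    have hF : ∀ x : ℚ, (FP n (k + 1) cs).eval x = f x := by
      intro x
      rw [FP_eval]
    -- Step A : periodicity
    have hstep : ∀ x : ℚ, f (x + 1) = f x := by
      intro x
      simp only [hfdef]
      have h1 : (∑ j ∈ Finset.range (k + 2), gb (x + 1 + (n:ℚ) * j) j * cc n (k + 1 - j))
          - (∑ j ∈ Finset.range (k + 2), gb (x + (n:ℚ) * j) j * cc n (k + 1 - j))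
          = ∑ i ∈ Finset.range (k + 1), gb ((x + (n:ℚ)) + (n:ℚ) * i) i * cc n (k - i) := by
        rw [← Finset.sum_sub_distrib]
        rw [Finset.sum_range_succ' (fun j => gb (x + 1 + (n:ℚ) * j) j * cc n (k + 1 - j)
          - gb (x + (n:ℚ) * j) j * cc n (k + 1 - j)) (k + 1)]
        have h0 : gb (x + 1 + (n:ℚ) * ((0:ℕ):ℚ)) 0 * cc n (k + 1 - 0)
            - gb (x + (n:ℚ) * ((0:ℕ):ℚ)) 0 * cc n (k + 1 - 0) = 0 := by simp
        rw [h0, add_zero]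
        apply Finset.sum_congr rfl
        intro i _
        have hp := gb_pascal (x + (n:ℚ) * i + n) i
        have e1 : x + 1 + (n:ℚ) * ((i + 1 : ℕ) : ℚ) = (x + (n:ℚ) * i + n) + 1 := by
          push_cast; ring
        have e2 : x + (n:ℚ) * ((i + 1 : ℕ) : ℚ) = x + (n:ℚ) * i + n := by push_cast; ring
        have e3 : (x + (n:ℚ)) + (n:ℚ) * i = x + (n:ℚ) * i + n := by ring
        have e4 : k + 1 - (i + 1) = k - i := by omega
        rw [e1, e2, e3, e4, hp]
        ring
      have h2 : gb (x + 1 + (n:ℚ) * ((k + 1 : ℕ) : ℚ) + 1) (k + 1)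
          - gb (x + (n:ℚ) * ((k + 1 : ℕ) : ℚ) + 1) (k + 1)
          = gb (x + (n:ℚ) * ((k + 1 : ℕ) : ℚ) + 1) k := by
        have hp := gb_pascal (x + (n:ℚ) * ((k + 1 : ℕ) : ℚ) + 1) k
        have e : x + 1 + (n:ℚ) * ((k + 1 : ℕ) : ℚ) + 1
            = (x + (n:ℚ) * ((k + 1 : ℕ) : ℚ) + 1) + 1 := by ring
        rw [e, hp]
        ring
      have h3 := IH (x + (n:ℚ))
      have e5 : (x + (n:ℚ)) + (n:ℚ) * (k:ℚ) + 1 = x + (n:ℚ) * ((k + 1 : ℕ) : ℚ) + 1 := by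
        push_cast; ring
      rw [e5] at h3
      linear_combination h1 - h2 + h3
    -- Step B : constancy
    have hconst : ∀ x : ℚ, f x = f 0 := by
      have hper : ∀ x : ℚ, (FP n (k + 1) cs).eval (x + 1) = (FP n (k + 1) cs).eval x := by
        intro x
        rw [hF, hF, hstep]
      have hnat : ∀ m : ℕ, (FP n (k + 1) cs).eval (m : ℚ) = (FP n (k + 1) cs).eval 0 := by
        intro m
        induction m with
        | zero => norm_num
        | succ m ih =>
          have hc : ((m + 1 : ℕ) : ℚ) = (m : ℚ) + 1 := by push_cast; ring
          rw [hc, hper, ih]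
      have hpoly : FP n (k + 1) cs = Polynomial.C ((FP n (k + 1) cs).eval 0) := by
        have hinf : {x : ℚ |
            (FP n (k + 1) cs - Polynomial.C ((FP n (k + 1) cs).eval 0)).IsRoot x}.Infinite := by
          apply Set.Infinite.mono _ (Set.infinite_range_of_injective
            (Nat.cast_injective : Function.Injective (Nat.cast : ℕ → ℚ)))
          rintro _ ⟨m, rfl⟩
          simp [Polynomial.IsRoot, hnat m]
        exact sub_eq_zero.mp (Polynomial.eq_zero_of_infinite_isRoot _ hinf)
      intro x
      rw [← hF, ← hF, hpoly]
      simp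
    -- Step C : value at 0 is 0
    have hzero : f 0 = 0 := by
      set t : ℚ := ∑ i ∈ Finset.range (k + 1),
          (Nat.choose (n * (i + 1)) (i + 1) : ℚ) * cc n (k - i) with htdef
      have e0 : f 0 = (t + cc n (k + 1)) - (Nat.choose (n * (k + 1) + 1) (k + 1) : ℚ) := by
        simp only [hfdef]
        congr 1
        · rw [Finset.sum_range_succ'
            (fun j => gb ((0:ℚ) + (n:ℚ) * j) j * cc n (k + 1 - j)) (k + 1)]
          congr 1
          · apply Finset.sum_congr rfl
            intro i _
            have h1 : (0:ℚ) + (n:ℚ) * ((i + 1 : ℕ) : ℚ) = ((n * (i + 1) : ℕ) : ℚ) := by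
              push_cast; ring
            have h2 : k + 1 - (i + 1) = k - i := by omega
            rw [h1, h2, gb_nat]
          · simp
        · have h1 : (0:ℚ) + (n:ℚ) * ((k + 1 : ℕ) : ℚ) + 1 = ((n * (k + 1) + 1 : ℕ) : ℚ) := by
            push_cast; ring
          rw [h1, gb_nat]
      have em1 : f (-1) = ((((n:ℚ) - 1) / n) * t + cc n (k + 1))
          - (Nat.choose (n * (k + 1)) (k + 1) : ℚ) := by
        simp only [hfdef]
        congr 1
        · rw [Finset.sum_range_succ'
            (fun j => gb ((-1:ℚ) + (n:ℚ) * j) j * cc n (k + 1 - j)) (k + 1)]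
          congr 1
          · rw [htdef, Finset.mul_sum]
            apply Finset.sum_congr rfl
            intro i _
            have h1 : (-1:ℚ) + (n:ℚ) * ((i + 1 : ℕ) : ℚ) = (n:ℚ) * ((i:ℚ) + 1) - 1 := by
              push_cast; ring
            have h2 : k + 1 - (i + 1) = k - i := by omega
            rw [h1, h2, gb_sub_one hn]
            ring
          · simp
        · have h1 : (-1:ℚ) + (n:ℚ) * ((k + 1 : ℕ) : ℚ) + 1 = ((n * (k + 1) : ℕ) : ℚ) := by
            push_cast; ring
          rw [h1, gb_nat]
      have heq : (t + cc n (k + 1)) - (Nat.choose (n * (k + 1) + 1) (k + 1) : ℚ)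
          = ((((n:ℚ) - 1) / n) * t + cc n (k + 1))
            - (Nat.choose (n * (k + 1)) (k + 1) : ℚ) := by
        rw [← e0, ← em1, hconst (-1)]
      have hx : (n:ℚ) * (((n:ℚ) - 1) / n) = (n:ℚ) - 1 := by field_simp
      have hp := hPascal n k
      have ht : t = (n:ℚ) * (Nat.choose (n * (k + 1)) k : ℚ) := by
        linear_combination (n:ℚ) * heq + t * hx + (n:ℚ) * hp
      rw [e0, ht]
      have hc := hC hn k
      linear_combination hc
    intro x
    have h := (hconst x).trans hzero
    simp only [hfdef] at h
    exact sub_eq_zero.mp h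

end FussCatalanAux

theorem fuss_catalan_series_log_derivative (n : ℕ) (hn : 1 ≤ n) :
    (n : ℚ⟦X⟧) * X *
        (d⁄dX ℚ (PowerSeries.mk fun k =>
          (Nat.choose (n * k) k : ℚ) / (((n : ℚ) - 1) * k + 1))) =
      (PowerSeries.mk fun k => (Nat.choose (n * k) k : ℚ) / (((n : ℚ) - 1) * k + 1)) *
        (PowerSeries.mk fun j => if j = 0 then 0 else (Nat.choose (n * j) j : ℚ)) := by
  classical
  apply PowerSeries.ext
  intro K
  set F : ℚ⟦X⟧ := PowerSeries.mk fun k =>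
    (Nat.choose (n * k) k : ℚ) / (((n : ℚ) - 1) * k + 1) with hFdef
  set B : ℚ⟦X⟧ := PowerSeries.mk fun j =>
    if j = 0 then 0 else (Nat.choose (n * j) j : ℚ) with hBdef
  rcases K with _ | k
  · rw [show (n : ℚ⟦X⟧) * X * (d⁄dX ℚ F) = ((n : ℚ⟦X⟧) * (d⁄dX ℚ F)) * X by ring,
      PowerSeries.coeff_zero_mul_X, PowerSeries.coeff_mul]
    simp [hFdef, hBdef]
  · -- the combinatorial identity, from `key` at x = 0
    have hk := FussCatalanAux.key hn (k + 1) 0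
    have e0 : (∑ i ∈ Finset.range (k + 1),
          (Nat.choose (n * (i + 1)) (i + 1) : ℚ) * FussCatalanAux.cc n (k - i))
        + FussCatalanAux.cc n (k + 1)
        = (Nat.choose (n * (k + 1) + 1) (k + 1) : ℚ) := by
      rw [Finset.sum_range_succ'
        (fun j => FussCatalanAux.gb ((0:ℚ) + (n:ℚ) * j) j * FussCatalanAux.cc n (k + 1 - j))
        (k + 1)] at hk
      have hL : FussCatalanAux.gb ((0:ℚ) + (n:ℚ) * ((0:ℕ):ℚ)) 0 * FussCatalanAux.cc n (k + 1 - 0)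
          = FussCatalanAux.cc n (k + 1) := by simp
      have hsum : (∑ i ∈ Finset.range (k + 1),
          FussCatalanAux.gb ((0:ℚ) + (n:ℚ) * ((i + 1 : ℕ):ℚ)) (i + 1)
            * FussCatalanAux.cc n (k + 1 - (i + 1)))
          = ∑ i ∈ Finset.range (k + 1),
            (Nat.choose (n * (i + 1)) (i + 1) : ℚ) * FussCatalanAux.cc n (k - i) := by
        apply Finset.sum_congr rfl
        intro i _
        have h1 : (0:ℚ) + (n:ℚ) * ((i + 1 : ℕ) : ℚ) = ((n * (i + 1) : ℕ) : ℚ) := by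
          push_cast; ring
        have h2 : k + 1 - (i + 1) = k - i := by omega
        rw [h1, h2, FussCatalanAux.gb_nat]
      have hR : FussCatalanAux.gb ((0:ℚ) + (n:ℚ) * ((k + 1 : ℕ):ℚ) + 1) (k + 1)
          = (Nat.choose (n * (k + 1) + 1) (k + 1) : ℚ) := by
        have h1 : (0:ℚ) + (n:ℚ) * ((k + 1 : ℕ) : ℚ) + 1 = ((n * (k + 1) + 1 : ℕ) : ℚ) := by
          push_cast; ring
        rw [h1, FussCatalanAux.gb_nat]
      rw [hL, hsum, hR] at hk
      exact hk
    have hd := FussCatalanAux.hD hn k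
    have hT : (∑ j ∈ Finset.range (k + 1 + 1),
        (if j = 0 then (0:ℚ) else (Nat.choose (n * j) j : ℚ)) * FussCatalanAux.cc n (k + 1 - j))
        = (n:ℚ) * ((k:ℚ) + 1) * FussCatalanAux.cc n (k + 1) := by
      rw [Finset.sum_range_succ'
        (fun j => (if j = 0 then (0:ℚ) else (Nat.choose (n * j) j : ℚ))
          * FussCatalanAux.cc n (k + 1 - j)) (k + 1)]
      have hsum : (∑ i ∈ Finset.range (k + 1),
          (if i + 1 = 0 then (0:ℚ) else (Nat.choose (n * (i + 1)) (i + 1) : ℚ))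
            * FussCatalanAux.cc n (k + 1 - (i + 1)))
          = ∑ i ∈ Finset.range (k + 1),
            (Nat.choose (n * (i + 1)) (i + 1) : ℚ) * FussCatalanAux.cc n (k - i) := by
        apply Finset.sum_congr rfl
        intro i _
        have h2 : k + 1 - (i + 1) = k - i := by omega
        simp [h2]
      rw [hsum]
      have h0 : (if (0:ℕ) = 0 then (0:ℚ) else (Nat.choose (n * 0) 0 : ℚ))
          * FussCatalanAux.cc n (k + 1 - 0) = 0 := by norm_num
      rw [h0, add_zero]
      linear_combination e0 + hd
    -- now compute coefficients
    have hn' : (n : ℚ⟦X⟧) = PowerSeries.C (n : ℚ) := (map_natCast (PowerSeries.C (R := ℚ)) n).symm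
    rw [hn', mul_assoc, PowerSeries.coeff_C_mul, PowerSeries.coeff_succ_X_mul,
      PowerSeries.coeff_derivative, mul_comm F B, PowerSeries.coeff_mul,
      Finset.Nat.sum_antidiagonal_eq_sum_range_succ_mk]
    simp only [hFdef, hBdef, PowerSeries.coeff_mk]
    have hcc : ∀ m : ℕ, (Nat.choose (n * m) m : ℚ) / (((n : ℚ) - 1) * m + 1)
        = FussCatalanAux.cc n m := fun m => rfl
    simp only [hcc]
    rw [hT]
    ring
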